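/- In the ℚ-algebra R generated by two elements t and s subject to the single relation t*s - s*t = s^2 (e.g. the quotient of the free algebra ℚ⟨t,s⟩ by the two-sided ideal generated by ts - st - s^2), for every positive integer p the element s^(2p) belongs to the two-sided ideal generated by t^p. -/
import Mathlib

open Finset Function

/-- The relation `t*s = s*t + s^2` on the free algebra `ℚ⟨t,s⟩`, where
`t` is the first generator and `s` the second. -/
inductive BrieskornRel : FreeAlgebra ℚ (Fin 2) → FreeAlgebra ℚ (Fin 2) → Prop
  | rel : BrieskornRel (FreeAlgebra.ι ℚ 0 * FreeAlgebra.ι ℚ 1)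
      (FreeAlgebra.ι ℚ 1 * FreeAlgebra.ι ℚ 0 + FreeAlgebra.ι ℚ 1 ^ 2)

section fwdDiffPoly

variable {G : Type*} [AddCommGroup G]

/-- Key fact: the `n`-th forward difference at `0` of a polynomial function of degree at
most `n` picks out `n!` times the top coefficient. -/
lemma fwdDiff_iter_poly (n : ℕ) (c : ℕ → G) :
    (fwdDiff (1 : ℕ))^[n] (fun k : ℕ => ∑ i ∈ range (n + 1), k ^ i • c i) 0
      = n.factorial • c n := by
  induction n generalizing c with
  | zero => simp
  | succ n ih =>
    rw [Function.iterate_succ_apply]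
    have hΔ : fwdDiff (1 : ℕ) (fun k : ℕ => ∑ i ∈ range (n + 2), k ^ i • c i)
        = fun k : ℕ => ∑ i ∈ range (n + 1),
            k ^ i • (∑ j ∈ Finset.Ico (i + 1) (n + 2), (j.choose i) • c j) := by
      funext k
      have hexp : ∀ i : ℕ, (k + 1) ^ i • c i - k ^ i • c i
          = ∑ j ∈ range i, (k ^ j * i.choose j) • c i := by
        intro i
        have hkp : (k + 1) ^ i = ∑ j ∈ range (i + 1), k ^ j * 1 ^ (i - j) * i.choose j :=
          add_pow k 1 i
        simp only [one_pow, mul_one] at hkp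
        rw [hkp, Finset.sum_range_succ, Nat.choose_self, mul_one, add_smul, add_sub_cancel_right,
          Finset.sum_smul]
      have h1 : fwdDiff (1 : ℕ) (fun k : ℕ => ∑ i ∈ range (n + 2), k ^ i • c i) k
          = ∑ i ∈ range (n + 2), ∑ j ∈ range i, (k ^ j * i.choose j) • c i := by
        simp only [fwdDiff, ← Finset.sum_sub_distrib]
        exact Finset.sum_congr rfl fun i _ => hexp i
      rw [h1]
      rw [show (∑ i ∈ range (n + 2), ∑ j ∈ range i, (k ^ j * i.choose j) • c i)
          = ∑ j ∈ Finset.Ico 0 (n + 2), ∑ i ∈ Finset.Ico 0 j,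
              (k ^ i * j.choose i) • c j by simp [Nat.Ico_zero_eq_range]]
      rw [← Finset.sum_Ico_Ico_comm' 0 (n + 2) (fun i j => (k ^ i * j.choose i) • c j)]
      rw [Nat.Ico_zero_eq_range, Finset.sum_range_succ]
      have hlast : ∑ j ∈ Finset.Ico (n + 1 + 1) (n + 2), (k ^ (n + 1) * j.choose (n + 1)) • c j
          = 0 := by simp
      rw [hlast, add_zero]
      refine Finset.sum_congr rfl fun i _ => ?_
      rw [Finset.smul_sum]
      exact Finset.sum_congr rfl fun j _ => mul_smul _ _ _
    rw [hΔ, ih]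
    have htop : ∑ j ∈ Finset.Ico (n + 1) (n + 2), (j.choose n) • c j = (n + 1) • c (n + 1) := by
      simp [Nat.choose_succ_self_right]
    rw [htop, smul_smul, Nat.factorial_succ, Nat.mul_comm]

end fwdDiffPoly

namespace BrieskornAux

noncomputable abbrev R := RingQuot BrieskornRel

noncomputable def T : R := RingQuot.mkAlgHom ℚ BrieskornRel (FreeAlgebra.ι ℚ 0)
noncomputable def S : R := RingQuot.mkAlgHom ℚ BrieskornRel (FreeAlgebra.ι ℚ 1)

lemma rel : T * S = S * T + S ^ 2 := by
  have := RingQuot.mkAlgHom_rel ℚ BrieskornRel.rel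
  simpa [map_mul, map_add, map_pow, T, S] using this

lemma T_mul_S_pow (k : ℕ) : T * S ^ k = S ^ k * (T + k • S) := by
  induction k with
  | zero => simp
  | succ k ih =>
    have h0 : T * S ^ (k + 1) = (T * S ^ k) * S := by
      rw [pow_succ, ← mul_assoc]
    rw [h0, ih]
    have hTS : (T + k • S) * S = S * (T + (k + 1) • S) := by
      rw [add_mul, rel, mul_add, smul_mul_assoc, mul_smul_comm, add_smul, one_smul, pow_two]
      abel
    rw [mul_assoc, hTS, pow_succ, mul_assoc]

lemma T_pow_mul_S_pow (m k : ℕ) : T ^ m * S ^ k = S ^ k * (T + k • S) ^ m := by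
  induction m with
  | zero => simp
  | succ m ih =>
    rw [pow_succ', mul_assoc, ih, ← mul_assoc, T_mul_S_pow, mul_assoc, ← pow_succ']

lemma sandwich (p k : ℕ) (hk : k ≤ p) :
    S ^ p * (T + k • S) ^ p = S ^ (p - k) * T ^ p * S ^ k := by
  rw [mul_assoc, T_pow_mul_S_pow, ← mul_assoc, ← pow_add, Nat.sub_add_cancel hk]

/-- Coefficients of `(T + k • S) ^ m` as a "polynomial" in `k`. -/
noncomputable def g : ℕ → ℕ → R
  | 0, 0 => 1
  | 0, _ + 1 => 0
  | m + 1, 0 => T * g m 0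
  | m + 1, i + 1 => T * g m (i + 1) + S * g m i

lemma g_eq_zero : ∀ m i, m < i → g m i = 0
  | 0, _ + 1, _ => rfl
  | m + 1, i + 1, h => by
    rw [g, g_eq_zero m (i + 1) (by omega), g_eq_zero m i (by omega)]
    simp

lemma g_diag : ∀ m, g m m = S ^ m
  | 0 => by rw [pow_zero]; rfl
  | m + 1 => by
    rw [g, g_eq_zero m (m + 1) (by omega), g_diag m, mul_zero, zero_add, ← pow_succ']

lemma pow_expand (m k : ℕ) :
    (T + k • S) ^ m = ∑ i ∈ range (m + 1), k ^ i • g m i := by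
  induction m with
  | zero => simp [g]
  | succ m ih =>
    have hg0 : g (m + 1) 0 = T * g m 0 := rfl
    rw [pow_succ', ih, add_mul, Finset.mul_sum, Finset.mul_sum,
      Finset.sum_range_succ' (fun i => k ^ i • g (m + 1) i) (m + 1)]
    have h1 : ∑ i ∈ range (m + 1), T * (k ^ i • g m i)
        = ∑ i ∈ range (m + 1), k ^ i • (T * g m i) :=
      Finset.sum_congr rfl fun i _ => mul_smul_comm _ _ _
    have h2 : ∑ i ∈ range (m + 1), (k • S) * (k ^ i • g m i)
        = ∑ i ∈ range (m + 1), k ^ (i + 1) • (S * g m i) := by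
      refine Finset.sum_congr rfl fun i _ => ?_
      rw [smul_mul_assoc, mul_smul_comm, smul_smul, pow_succ']
    have h3 : ∑ i ∈ range (m + 1), k ^ (i + 1) • g (m + 1) (i + 1)
        = ∑ i ∈ range (m + 1), (k ^ (i + 1) • (T * g m (i + 1)) + k ^ (i + 1) • (S * g m i)) := by
      refine Finset.sum_congr rfl fun i _ => ?_
      rw [g, smul_add]
    have h6 : ∑ i ∈ range (m + 1), k ^ i • (T * g m i)
        = ∑ i ∈ range (m + 1), k ^ (i + 1) • (T * g m (i + 1)) + k ^ 0 • (T * g m 0) := by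
      have h7 := Finset.sum_range_succ (fun i => k ^ i • (T * g m i)) (m + 1)
      simp only [g_eq_zero m (m + 1) (by omega), mul_zero, smul_zero, add_zero] at h7
      rw [← h7, Finset.sum_range_succ' (fun i => k ^ i • (T * g m i)) (m + 1)]
    rw [h1, h2, h3, Finset.sum_add_distrib, hg0, h6]
    abel

theorem main (p : ℕ) : S ^ (2 * p) ∈ TwoSidedIdeal.span {T ^ p} := by
  classical
  set I := TwoSidedIdeal.span {(T : R) ^ p} with hI
  have hpoly : (fwdDiff (1 : ℕ))^[p] (fun k : ℕ => (T + k • S) ^ p) 0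
      = p.factorial • S ^ p := by
    have h := fwdDiff_iter_poly p (g p)
    have hfun : (fun k : ℕ => (T + k • S) ^ p)
        = fun k : ℕ => ∑ i ∈ range (p + 1), k ^ i • g p i :=
      funext fun k => pow_expand p k
    rw [hfun, h, g_diag]
  have hfd : p.factorial • S ^ p
      = ∑ k ∈ range (p + 1), ((-1 : ℤ) ^ (p - k) * p.choose k) • (T + k • S) ^ p := by
    rw [← hpoly, fwdDiff_iter_eq_sum_shift]
    refine Finset.sum_congr rfl fun k _ => ?_
    norm_num
  have key : p.factorial • (S ^ p * S ^ p)
      = ∑ k ∈ range (p + 1),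
          ((-1 : ℤ) ^ (p - k) * p.choose k) • (S ^ (p - k) * T ^ p * S ^ k) := by
    calc p.factorial • (S ^ p * S ^ p)
        = S ^ p * (p.factorial • S ^ p) := by rw [mul_smul_comm]
      _ = S ^ p * ∑ k ∈ range (p + 1),
            ((-1 : ℤ) ^ (p - k) * p.choose k) • (T + k • S) ^ p := by rw [← hfd]
      _ = ∑ k ∈ range (p + 1),
            ((-1 : ℤ) ^ (p - k) * p.choose k) • (S ^ (p - k) * T ^ p * S ^ k) := by
          rw [Finset.mul_sum]
          refine Finset.sum_congr rfl fun k hk => ?_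
          rw [Finset.mem_range] at hk
          rw [mul_smul_comm, sandwich p k (by omega)]
  have hsum : p.factorial • (S ^ p * S ^ p) ∈ I := by
    rw [key]
    refine sum_mem fun k _ => ?_
    refine zsmul_mem ?_ _
    exact I.mul_mem_right _ _ (I.mul_mem_left _ _ (TwoSidedIdeal.subset_span rfl))
  have hfac : ((p.factorial : ℚ)) ≠ 0 := by
    exact_mod_cast Nat.factorial_ne_zero p
  have hS2p : S ^ (2 * p)
      = (p.factorial : ℚ)⁻¹ • (p.factorial • (S ^ p * S ^ p)) := by
    rw [← Nat.cast_smul_eq_nsmul ℚ, inv_smul_smul₀ hfac, two_mul, pow_add]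
  rw [hS2p, Algebra.smul_def]
  exact I.mul_mem_left _ _ hsum

end BrieskornAux

/-- In `R = ℚ⟨t,s⟩/(ts - st - s²)`, the element `s^(2p)` lies in the two-sided
ideal generated by `t^p`, for every positive integer `p`. -/
theorem s_pow_mem_ideal_t_pow (p : ℕ) (hp : 0 < p) :
    (RingQuot.mkAlgHom ℚ BrieskornRel (FreeAlgebra.ι ℚ 1)) ^ (2 * p) ∈
      TwoSidedIdeal.span {(RingQuot.mkAlgHom ℚ BrieskornRel (FreeAlgebra.ι ℚ 0)) ^ p} := by
  exact BrieskornAux.main p
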